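/- Let (u_k) be a sequence of nonnegative reals such that for all k ≥ k₀, u_{k+1} ≤ (1 − c/k) u_k + e/k + d/k², where c, d, e > 0 and c > 0 (case p = 1 of the recursion). Then limsup_{k→∞} u_k ≤ e/c. -/

import Mathlib

open Filter

/-- Chung-type lemma, case `p = 1`: if `u_{k+1} ≤ (1 − c/k) u_k + e/k + d/k²`
eventually, then `limsup u_k ≤ e/c`. -/
theorem stmt_4 (u : ℕ → ℝ) (hu : ∀ k, 0 ≤ u k)
    (c d e : ℝ) (hc : 0 < c) (hd : 0 < d) (he : 0 < e)
    (k₀ : ℕ) (hk₀ : 1 ≤ k₀)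
    (hrec : ∀ k : ℕ, k₀ ≤ k →
      u (k + 1) ≤ (1 - c / (k : ℝ)) * u k + e / (k : ℝ) + d / (k : ℝ) ^ 2) :
    Filter.limsup u Filter.atTop ≤ e / c := by
  set L : ℝ := e / c with hLdef
  have hcL : c * L = e := by rw [hLdef]; field_simp
  have hcob : Filter.IsCoboundedUnder (· ≤ ·) Filter.atTop u :=
    isCoboundedUnder_le_of_eventually_le _ (x := 0) (Eventually.of_forall hu)
  refine le_of_forall_pos_le_add fun ε hε => ?_
  refine Filter.limsup_le_of_le hcob ?_
  -- choose K
  obtain ⟨K₁, hK₁⟩ := exists_nat_ge (max (max c (4*d/(c*ε))) (2*d/ε))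
  set K : ℕ := max K₁ (max k₀ 1) with hKdef
  have hKget : ∀ k : ℕ, K ≤ k → c ≤ (k:ℝ) ∧ 4*d/(c*ε) ≤ (k:ℝ) ∧ 2*d/ε ≤ (k:ℝ) ∧ k₀ ≤ k ∧ (1:ℝ) ≤ (k:ℝ) := by
    intro k hk
    have h1 : (K₁ : ℝ) ≤ (k : ℝ) := by
      exact_mod_cast le_trans (le_max_left _ _) hk
    have hk0 : k₀ ≤ k := le_trans (le_trans (le_max_left _ _) (le_max_right K₁ _)) hk
    have hk1 : 1 ≤ k := le_trans (le_trans (le_max_right _ _) (le_max_right K₁ _)) hk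
    refine ⟨?_, ?_, ?_, hk0, by exact_mod_cast hk1⟩
    · exact le_trans (le_trans (le_max_left _ _) (le_max_left _ _)) (le_trans hK₁ h1)
    · exact le_trans (le_trans (le_max_right _ _) (le_max_left _ _)) (le_trans hK₁ h1)
    · exact le_trans (le_max_right _ _) (le_trans hK₁ h1)
  -- rewritten recursion
  have hw : ∀ k : ℕ, K ≤ k → u (k+1) - L ≤ (1 - c/(k:ℝ)) * (u k - L) + d/(k:ℝ)^2 := by
    intro k hk
    obtain ⟨_, _, _, hk0, hk1⟩ := hKget k hk
    have hkpos : (0:ℝ) < (k:ℝ) := lt_of_lt_of_le one_pos hk1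
    have hrk := hrec k hk0
    have hLk : c / (k:ℝ) * L = e / (k:ℝ) := by
      rw [div_mul_eq_mul_div, hcL]
    nlinarith [hrk, hLk]
  -- drop lemma
  have hdrop : ∀ k : ℕ, K ≤ k → ε/2 ≤ u k - L →
      u (k+1) - L ≤ (u k - L) - c*ε/(4*(k:ℝ)) := by
    intro k hk hwk
    obtain ⟨hkc, hkd, _, _, hk1⟩ := hKget k hk
    have hkpos : (0:ℝ) < (k:ℝ) := lt_of_lt_of_le one_pos hk1
    have h1 := hw k hk
    have hcεpos : 0 < c * ε := mul_pos hc hε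
    -- d/k^2 ≤ c*ε/(4*k)
    have hdk : d/(k:ℝ)^2 ≤ c*ε/(4*(k:ℝ)) := by
      rw [div_le_div_iff₀ (by positivity) (by positivity)]
      have : 4*d ≤ c*ε*(k:ℝ) := by
        rw [div_le_iff₀ hcεpos] at hkd
        linarith
      nlinarith
    -- (c/k)*(u k - L) ≥ (c/k)*(ε/2)
    have hck : 0 < c/(k:ℝ) := by positivity
    have hexp : (1 - c/(k:ℝ))*(u k - L) = (u k - L) - c/(k:ℝ)*(u k - L) := by ring
    have heq : c/(k:ℝ)*(ε/2) = 2*(c*ε/(4*(k:ℝ))) := by field_simp; ring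
    have hm := mul_le_mul_of_nonneg_left hwk (le_of_lt hck)
    linarith
  -- there is n ≥ K with u n - L < ε/2
  have hexists : ∃ n : ℕ, K ≤ n ∧ u n - L < ε/2 := by
    by_contra hcon
    push_neg at hcon
    set s : ℕ → ℝ := fun n => ∑ i ∈ Finset.range n, (1/(i:ℝ)) with hsdef
    have hstend : Tendsto s atTop atTop := by
      rw [hsdef, ← not_summable_iff_tendsto_nat_atTop_of_nonneg (fun i => by positivity)]
      exact Real.not_summable_one_div_natCast
    have hind : ∀ n : ℕ, K ≤ n → u n - L ≤ (u K - L) - c*ε/4 * (s n - s K) := by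
      intro n hn
      induction n, hn using Nat.le_induction with
      | base => simp
      | succ m hm ih =>
        have hwm := hcon m hm
        have h1 := hdrop m hm hwm
        have hsm : s (m+1) = s m + 1/(m:ℝ) := by
          rw [hsdef]; simp [Finset.sum_range_succ]
        obtain ⟨_, _, _, _, hm1⟩ := hKget m hm
        have hmpos : (0:ℝ) < (m:ℝ) := lt_of_lt_of_le one_pos hm1
        have : c*ε/(4*(m:ℝ)) = c*ε/4 * (1/(m:ℝ)) := by ring
        rw [hsm]
        nlinarith
    have hcεpos : 0 < c * ε := mul_pos hc hε
    have hbig := hstend.eventually_ge_atTop (s K + 4*(u K + 1)/(c*ε))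
    obtain ⟨n, hn1, hn2⟩ := (hbig.and (eventually_ge_atTop K)).exists
    have h1 := hind n hn2
    have h2 : c*ε/4 * (s n - s K) ≥ u K + 1 := by
      have : s n - s K ≥ 4*(u K + 1)/(c*ε) := by linarith
      rw [ge_iff_le, div_le_iff₀ hcεpos] at this
      have hmul := mul_le_mul_of_nonneg_left this (le_of_lt (by positivity : (0:ℝ) < c*ε/4 / (c*ε)))
      calc u K + 1 = c*ε/4/(c*ε) * (4*(u K + 1)) := by field_simp
        _ ≤ c*ε/4/(c*ε) * ((s n - s K) * (c*ε)) := hmul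
        _ = c*ε/4 * (s n - s K) := by field_simp
    have := hu n
    linarith
  obtain ⟨n, hnK, hn⟩ := hexists
  -- from n on, u m - L ≤ ε
  have hfinal : ∀ m : ℕ, n ≤ m → u m - L ≤ ε := by
    intro m hm
    induction m, hm using Nat.le_induction with
    | base => linarith
    | succ m hm ih =>
      have hmK : K ≤ m := le_trans hnK hm
      obtain ⟨hmc, _, hmd, _, hm1⟩ := hKget m hmK
      have hmpos : (0:ℝ) < (m:ℝ) := lt_of_lt_of_le one_pos hm1
      by_cases hcase : ε/2 ≤ u m - L
      · have h1 := hdrop m hmK hcase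
        have : 0 < c*ε/(4*(m:ℝ)) := by positivity
        linarith
      · push_neg at hcase
        have h1 := hw m hmK
        have h2 : 0 ≤ 1 - c/(m:ℝ) := by
          rw [sub_nonneg, div_le_one hmpos]; exact hmc
        have h3 : 1 - c/(m:ℝ) ≤ 1 := by
          have : 0 ≤ c/(m:ℝ) := by positivity
          linarith
        have h4 : d/(m:ℝ)^2 ≤ ε/2 := by
          have hdm : 2*d ≤ ε*(m:ℝ) := by
            rw [div_le_iff₀ hε] at hmd; linarith
          rw [div_le_div_iff₀ (by positivity) two_pos]
          nlinarith [hm1, hε.le, hmpos]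
        have h5 : (1 - c/(m:ℝ)) * (u m - L) ≤ ε/2 := by
          have t1 := mul_le_mul_of_nonneg_left (le_of_lt hcase) h2
          have t2 := mul_le_mul_of_nonneg_right h3 (by positivity : (0:ℝ) ≤ ε/2)
          linarith
        linarith
  filter_upwards [eventually_ge_atTop n] with m hm
  have := hfinal m hm
  linarith
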